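/- If A ∈ Rⁿˣⁿ is diagonally stable, witnessed by positive diagonal P with AᵀP + PA < 0, then for any B, C ∈ R^{n×p} and any positive diagonal P₂ ∈ R^{p×p}, there exists D ∈ R^{p×p} such that the block matrix F = [[A, B],[Cᵀ, D]] is diagonally stable with diagonal Lyapunov matrix diag(P, P₂); a sufficient condition is DᵀP₂ + P₂D − (BᵀP + P₂Cᵀ) Ã⁻¹ (CP₂ + PB) < 0 where Ã := AᵀP + PA. -/

import Mathlib

open Matrix

/-- Adding `p` species: if `A` is diagonally stable with witness `P = diag p₁`,
then for any `B, C` and any positive diagonal `P₂`, there exists `D` making the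
block matrix `F = [[A, B],[Cᵀ, D]]` diagonally stable with Lyapunov matrix
`diag(P, P₂)`; moreover the Schur condition
`DᵀP₂ + P₂D − (BᵀP + P₂Cᵀ) Ã⁻¹ (CP₂ + PB) < 0` (with `Ã = AᵀP + PA`) is
sufficient. -/
theorem block_extension_diagStable {n p : ℕ}
    (A : Matrix (Fin n) (Fin n) ℝ)
    (p1 : Fin n → ℝ) (hp1 : ∀ i, 0 < p1 i)
    (hstab : ∀ v : Fin n → ℝ, v ≠ 0 →
      v ⬝ᵥ ((Aᵀ * Matrix.diagonal p1 + Matrix.diagonal p1 * A).mulVec v) < 0)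
    (B C : Matrix (Fin n) (Fin p) ℝ)
    (p2 : Fin p → ℝ) (hp2 : ∀ i, 0 < p2 i) :
    (∃ D : Matrix (Fin p) (Fin p) ℝ,
      ∀ v : Fin n ⊕ Fin p → ℝ, v ≠ 0 →
        v ⬝ᵥ (((Matrix.fromBlocks A B Cᵀ D)ᵀ * Matrix.diagonal (Sum.elim p1 p2) +
          Matrix.diagonal (Sum.elim p1 p2) * Matrix.fromBlocks A B Cᵀ D).mulVec v) < 0) ∧
    (∀ D : Matrix (Fin p) (Fin p) ℝ,
      (∀ w : Fin p → ℝ, w ≠ 0 →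
        w ⬝ᵥ ((Dᵀ * Matrix.diagonal p2 + Matrix.diagonal p2 * D -
          (Bᵀ * Matrix.diagonal p1 + Matrix.diagonal p2 * Cᵀ) *
            (Aᵀ * Matrix.diagonal p1 + Matrix.diagonal p1 * A)⁻¹ *
          (C * Matrix.diagonal p2 + Matrix.diagonal p1 * B)).mulVec w) < 0) →
      ∀ v : Fin n ⊕ Fin p → ℝ, v ≠ 0 →
        v ⬝ᵥ (((Matrix.fromBlocks A B Cᵀ D)ᵀ * Matrix.diagonal (Sum.elim p1 p2) +
          Matrix.diagonal (Sum.elim p1 p2) * Matrix.fromBlocks A B Cᵀ D).mulVec v) < 0) := by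
  set P : Matrix (Fin n) (Fin n) ℝ := Matrix.diagonal p1 with hPdef
  set P2 : Matrix (Fin p) (Fin p) ℝ := Matrix.diagonal p2 with hP2def
  set Atil : Matrix (Fin n) (Fin n) ℝ := Aᵀ * P + P * A with hAtildef
  have hAtilT : Atilᵀ = Atil := by
    simp [hAtildef, Matrix.transpose_add, Matrix.transpose_mul, hPdef, add_comm]
  have hAtilHerm : Atil.IsHermitian := by
    rw [Matrix.IsHermitian, Matrix.conjTranspose_eq_transpose_of_trivial]; exact hAtilT
  have hdet : Atil.det ≠ 0 := by
    intro h
    obtain ⟨v, hv0, hv⟩ := (Matrix.exists_mulVec_eq_zero_iff).2 h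
    have := hstab v hv0
    rw [hv, dotProduct_zero] at this
    exact lt_irrefl 0 this
  haveI : Invertible Atil := Atil.invertibleOfIsUnitDet (isUnit_iff_ne_zero.2 hdet)
  set E : Matrix (Fin n) (Fin p) ℝ := C * P2 + P * B with hEdef
  have hEH : Eᴴ = Bᵀ * P + P2 * Cᵀ := by
    rw [Matrix.conjTranspose_eq_transpose_of_trivial]
    simp [hEdef, Matrix.transpose_add, Matrix.transpose_mul, hPdef, hP2def, add_comm]
  -- the key sufficiency claim (second bullet)
  have key : ∀ D : Matrix (Fin p) (Fin p) ℝ,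
      (∀ w : Fin p → ℝ, w ≠ 0 →
        w ⬝ᵥ ((Dᵀ * P2 + P2 * D -
          (Bᵀ * P + P2 * Cᵀ) * Atil⁻¹ * (C * P2 + P * B)).mulVec w) < 0) →
      ∀ v : Fin n ⊕ Fin p → ℝ, v ≠ 0 →
        v ⬝ᵥ (((Matrix.fromBlocks A B Cᵀ D)ᵀ * Matrix.diagonal (Sum.elim p1 p2) +
          Matrix.diagonal (Sum.elim p1 p2) * Matrix.fromBlocks A B Cᵀ D).mulVec v) < 0 := by
    intro D hD v hv
    have hM : (Matrix.fromBlocks A B Cᵀ D)ᵀ * Matrix.diagonal (Sum.elim p1 p2) +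
        Matrix.diagonal (Sum.elim p1 p2) * Matrix.fromBlocks A B Cᵀ D
        = Matrix.fromBlocks Atil E Eᴴ (Dᵀ * P2 + P2 * D) := by
      rw [← Matrix.fromBlocks_diagonal, Matrix.fromBlocks_transpose,
        Matrix.fromBlocks_multiply, Matrix.fromBlocks_multiply, Matrix.fromBlocks_add, hEH]
      congr 1 <;> simp [hAtildef, hEdef, add_comm] <;> rfl
    set x : Fin n → ℝ := v ∘ Sum.inl with hxdef
    set y : Fin p → ℝ := v ∘ Sum.inr with hydef
    have hv' : Sum.elim x y = v := Sum.elim_comp_inl_inr v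
    have hschur := Matrix.schur_complement_eq₁₁ (A := Atil) E (Dᵀ * P2 + P2 * D) x y hAtilHerm
    have hsx : star (Sum.elim x y) = Sum.elim x y := star_trivial _
    rw [hsx] at hschur
    rw [hM, ← hv', dotProduct_mulVec, hschur]
    set u : Fin n → ℝ := x + (Atil⁻¹ * E) *ᵥ y with hudef
    have hsu : star u = u := star_trivial _
    have hsy : star y = y := star_trivial _
    rw [hsu, hsy, ← dotProduct_mulVec, ← dotProduct_mulVec]
    have hfirst : u ⬝ᵥ Atil *ᵥ u ≤ 0 := by
      rcases eq_or_ne u 0 with h | h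
      · simp [h]
      · exact le_of_lt (hstab u h)
    rcases eq_or_ne y 0 with hy | hy
    · have hx0 : x ≠ 0 := by
        intro hx
        apply hv
        rw [← hv', hx, hy]
        ext (i | i) <;> rfl
      have hu : u = x := by simp [hudef, hy]
      have := hstab x hx0
      rw [hu]
      simp [hy]
      exact this
    · have hsecond := hD y hy
      rw [hEH]
      calc u ⬝ᵥ Atil *ᵥ u +
            y ⬝ᵥ (Dᵀ * P2 + P2 * D - (Bᵀ * P + P2 * Cᵀ) * Atil⁻¹ * E) *ᵥ y
          ≤ 0 + y ⬝ᵥ (Dᵀ * P2 + P2 * D - (Bᵀ * P + P2 * Cᵀ) * Atil⁻¹ * E) *ᵥ y := by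
            exact add_le_add hfirst le_rfl
        _ < 0 := by rw [zero_add]; exact hsecond
  constructor
  · -- existence: choose D cancelling the correction term
    have hP2det : IsUnit P2.det := by
      rw [hP2def, Matrix.det_diagonal]
      exact isUnit_iff_ne_zero.2 (Finset.prod_ne_zero_iff.2 fun i _ => (hp2 i).ne')
    set NN : Matrix (Fin p) (Fin p) ℝ :=
      (Bᵀ * P + P2 * Cᵀ) * Atil⁻¹ * (C * P2 + P * B) with hNNdef
    have hNNT : NNᵀ = NN := by
      have h1 : (Bᵀ * P + P2 * Cᵀ)ᵀ = C * P2 + P * B := by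
        simp [Matrix.transpose_add, Matrix.transpose_mul, hPdef, hP2def, add_comm]
      have h2 : (C * P2 + P * B)ᵀ = Bᵀ * P + P2 * Cᵀ := by
        simp [Matrix.transpose_add, Matrix.transpose_mul, hPdef, hP2def, add_comm]
      have h3 : (Atil⁻¹)ᵀ = Atil⁻¹ := by
        rw [Matrix.transpose_nonsing_inv, hAtilT]
      rw [hNNdef, Matrix.transpose_mul, Matrix.transpose_mul, h1, h2, h3, Matrix.mul_assoc]
    have hP2T : P2ᵀ = P2 := by simp [hP2def]
    refine ⟨(1/2 : ℝ) • (P2⁻¹ * (NN - P2)), ?_⟩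
    have hDT : ((1/2 : ℝ) • (P2⁻¹ * (NN - P2)))ᵀ = (1/2 : ℝ) • ((NN - P2) * P2⁻¹) := by
      rw [Matrix.transpose_smul, Matrix.transpose_mul, Matrix.transpose_sub, hNNT, hP2T,
        Matrix.transpose_nonsing_inv, hP2T]
    have hSchur : ((1/2 : ℝ) • (P2⁻¹ * (NN - P2)))ᵀ * P2 + P2 * ((1/2 : ℝ) • (P2⁻¹ * (NN - P2)))
        - NN = -P2 := by
      rw [hDT, Matrix.smul_mul, Matrix.mul_smul, Matrix.mul_assoc,
        Matrix.nonsing_inv_mul P2 hP2det, Matrix.mul_one,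
        Matrix.mul_nonsing_inv_cancel_left P2 _ hP2det, ← smul_add]
      rw [← two_smul ℝ (NN - P2), smul_smul]
      norm_num
    intro v hv
    apply key _ _ v hv
    intro w hw
    rw [hSchur]
    have : w ⬝ᵥ (-P2) *ᵥ w = -(∑ i, p2 i * (w i * w i)) := by
      rw [Matrix.neg_mulVec, dotProduct_neg, hP2def]
      congr 1
      simp [dotProduct, Matrix.mulVec_diagonal]
      exact Finset.sum_congr rfl fun i _ => by ring
    rw [this, neg_lt, neg_zero]
    obtain ⟨i, hi⟩ := Function.ne_iff.1 hw
    refine Finset.sum_pos' (fun j _ => ?_) ⟨i, Finset.mem_univ i, ?_⟩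
    · exact mul_nonneg (hp2 j).le (mul_self_nonneg _)
    · exact mul_pos (hp2 i) (mul_self_pos.2 hi)
  · exact key
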